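/- Let T : S_n(ℝ) → S_n(ℝ) be a linear transformation such that T(A) is positive definite whenever A is positive definite. Then the following are equivalent: (i) for every A ∈ S_n(ℝ), if T(A) is positive definite then A is positive definite; (ii) for every A ∈ S_n(ℝ), if A is positive semi-definite and singular then T(A) is positive semi-definite and singular. -/

import Mathlib

open Matrix

/-- The space `Sₙ(ℝ)` of `n × n` real symmetric matrices, as a submodule of the space of
all `n × n` real matrices. -/
def SymMat (n : ℕ) : Submodule ℝ (Matrix (Fin n) (Fin n) ℝ) where
  carrier := {A | A.IsSymm}
  add_mem' := fun ha hb => ha.add hb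
  zero_mem' := by simp [Matrix.IsSymm]
  smul_mem' := fun c _ hA => hA.smul c

namespace Stmt11Aux

variable {n : ℕ}

lemma myIsHerm {A : Matrix (Fin n) (Fin n) ℝ} (h : A.IsSymm) : A.IsHermitian := by
  rwa [Matrix.IsHermitian, Matrix.conjTranspose_eq_transpose_of_trivial]

lemma mySmulPSD {c : ℝ} (hc : 0 ≤ c) {M : Matrix (Fin n) (Fin n) ℝ} (hM : M.PosSemidef) :
    (c • M).PosSemidef := by
  refine .of_dotProduct_mulVec_nonneg ?_ fun x => ?_
  · show (c • M)ᴴ = c • M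
    rw [conjTranspose_smul, hM.1.eq, star_trivial]
  · rw [smul_mulVec, dotProduct_smul]
    exact smul_nonneg hc (hM.dotProduct_mulVec_nonneg x)

lemma mySmulPD {c : ℝ} (hc : 0 < c) {M : Matrix (Fin n) (Fin n) ℝ} (hM : M.PosDef) :
    (c • M).PosDef := by
  refine .of_dotProduct_mulVec_pos (mySmulPSD hc.le hM.posSemidef).1 fun x hx => ?_
  rw [smul_mulVec, dotProduct_smul]
  exact smul_pos hc (hM.dotProduct_mulVec_pos hx)

lemma myPDofPSDdet {M : Matrix (Fin n) (Fin n) ℝ} (hM : M.PosSemidef) (hd : M.det ≠ 0) :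
    M.PosDef := by
  refine .of_dotProduct_mulVec_pos hM.1 fun x hx => lt_of_le_of_ne (hM.dotProduct_mulVec_nonneg x) fun h0 => hd ?_
  exact Matrix.exists_mulVec_eq_zero_iff.mp ⟨x, hx, (hM.dotProduct_mulVec_zero_iff x).mp h0.symm⟩

lemma myPDofEig {A : Matrix (Fin n) (Fin n) ℝ} (hA : A.IsHermitian)
    (h : ∀ i, 0 < hA.eigenvalues i) : A.PosDef := by
  refine myPDofPSDdet (hA.posSemidef_iff_eigenvalues_nonneg.mpr fun i => (h i).le) ?_
  rw [hA.det_eq_prod_eigenvalues]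
  have : 0 < ∏ i, hA.eigenvalues i := Finset.prod_pos fun i _ => h i
  simpa using this.ne'

end Stmt11Aux

open Stmt11Aux

/-- Let `T : Sₙ(ℝ) → Sₙ(ℝ)` be linear and preserve positive definiteness.
Then `T(A)` positive definite implies `A` positive definite (for all `A`) if and only if
`T` preserves the set of singular, positive semi-definite symmetric matrices. -/
theorem stmt11 (n : ℕ) (T : SymMat n →ₗ[ℝ] SymMat n)
    (hT : ∀ A : SymMat n, (A : Matrix (Fin n) (Fin n) ℝ).PosDef →
      ((T A : Matrix (Fin n) (Fin n) ℝ)).PosDef) :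
    (∀ A : SymMat n, ((T A : Matrix (Fin n) (Fin n) ℝ)).PosDef →
        (A : Matrix (Fin n) (Fin n) ℝ).PosDef) ↔
    (∀ A : SymMat n,
        (A : Matrix (Fin n) (Fin n) ℝ).PosSemidef ∧ (A : Matrix (Fin n) (Fin n) ℝ).det = 0 →
        ((T A : Matrix (Fin n) (Fin n) ℝ)).PosSemidef ∧
          ((T A : Matrix (Fin n) (Fin n) ℝ)).det = 0) := by
  classical
  set e1 : SymMat n := ⟨1, Matrix.isSymm_one⟩ with he1
  have hI : ((e1 : Matrix (Fin n) (Fin n) ℝ)).PosDef := Matrix.PosDef.one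
  have hTe1 : ((T e1 : Matrix (Fin n) (Fin n) ℝ)).PosDef := hT e1 hI
  constructor
  · rintro h1 A ⟨hpsd, hdet⟩
    have hq : ∀ x : Fin n → ℝ, 0 ≤ star x ⬝ᵥ ((T A : Matrix (Fin n) (Fin n) ℝ)) *ᵥ x := by
      intro x
      rcases eq_or_ne x 0 with rfl | hx
      · simp
      set q : ℝ := star x ⬝ᵥ ((T A : Matrix (Fin n) (Fin n) ℝ)) *ᵥ x with hqdef
      set w : ℝ := star x ⬝ᵥ ((T e1 : Matrix (Fin n) (Fin n) ℝ)) *ᵥ x with hwdef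
      have hwpos : 0 < w := hTe1.dotProduct_mulVec_pos hx
      have key : ∀ ε : ℝ, 0 < ε → 0 < q + ε * w := by
        intro ε hε
        have hAe : ((A + ε • e1 : SymMat n) : Matrix (Fin n) (Fin n) ℝ).PosDef := by
          have hco : ((A + ε • e1 : SymMat n) : Matrix (Fin n) (Fin n) ℝ)
              = (A : Matrix (Fin n) (Fin n) ℝ) + ε • ((e1 : Matrix (Fin n) (Fin n) ℝ)) := by
            simp
          rw [hco]
          exact Matrix.PosDef.posSemidef_add hpsd (mySmulPD hε hI)
        have hpos := (hT _ hAe).dotProduct_mulVec_pos hx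
        have hTcoe : ((T (A + ε • e1) : Matrix (Fin n) (Fin n) ℝ))
            = (T A : Matrix (Fin n) (Fin n) ℝ) + ε • (T e1 : Matrix (Fin n) (Fin n) ℝ) := by
          rw [map_add, _root_.map_smul]; simp
        rw [hTcoe, add_mulVec, smul_mulVec, dotProduct_add, dotProduct_smul] at hpos
        simpa [hqdef, hwdef, smul_eq_mul] using hpos
      by_contra hq0
      push_neg at hq0
      have hq0' : q < 0 := hq0
      have hkey := key (-q / (2 * w)) (div_pos (neg_pos.mpr hq0') (by positivity))
      have : q + -q / (2 * w) * w = q / 2 := by field_simp; ring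
      rw [this] at hkey
      linarith
    have hTApsd : ((T A : Matrix (Fin n) (Fin n) ℝ)).PosSemidef := .of_dotProduct_mulVec_nonneg (myIsHerm (T A).2) hq
    refine ⟨hTApsd, ?_⟩
    by_contra hd
    have := (h1 A (myPDofPSDdet hTApsd hd)).det_pos
    linarith [hdet ▸ this]
  · intro h2 A hTA
    by_contra hA
    have hH : (A : Matrix (Fin n) (Fin n) ℝ).IsHermitian := myIsHerm A.2
    have hex : ∃ i, hH.eigenvalues i ≤ 0 := by
      by_contra hc; push_neg at hc
      exact hA (myPDofEig hH hc)
    obtain ⟨i, hi⟩ := hex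
    obtain ⟨i₀, -, hmin⟩ := Finset.exists_min_image Finset.univ hH.eigenvalues
      ⟨i, Finset.mem_univ i⟩
    set μ : ℝ := hH.eigenvalues i₀ with hμdef
    have hμ : μ ≤ 0 := le_trans (hmin i (Finset.mem_univ i)) hi
    have h1μ : 0 < 1 - μ := by linarith
    set t : ℝ := 1 / (1 - μ) with htdef
    have ht : 0 < t := by positivity
    set U : Matrix (Fin n) (Fin n) ℝ := (hH.eigenvectorUnitary : Matrix (Fin n) (Fin n) ℝ)
      with hUdef
    have hU : U * star U = 1 := Matrix.mem_unitaryGroup_iff.mp hH.eigenvectorUnitary.2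
    have hdiag : Matrix.diagonal (fun j => hH.eigenvalues j - μ)
        = Matrix.diagonal (RCLike.ofReal ∘ hH.eigenvalues) - μ • (1 : Matrix (Fin n) (Fin n) ℝ) := by
      ext j k
      by_cases h : j = k <;> simp [Matrix.diagonal_apply, Matrix.one_apply, h]
    have hC : (A : Matrix (Fin n) (Fin n) ℝ) - μ • 1
        = U * Matrix.diagonal (fun j => hH.eigenvalues j - μ) * star U := by
      rw [hdiag, Matrix.mul_sub, Matrix.sub_mul]
      congr 1
      · exact hH.spectral_theorem
      · rw [Matrix.mul_smul, Matrix.mul_one, Matrix.smul_mul, hU]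
    have hCpsd : ((A : Matrix (Fin n) (Fin n) ℝ) - μ • 1).PosSemidef := by
      rw [hC]
      have hd := (Matrix.posSemidef_diagonal_iff.mpr fun j =>
        sub_nonneg.mpr (hmin j (Finset.mem_univ j))).mul_mul_conjTranspose_same U
      simpa [Matrix.star_eq_conjTranspose] using hd
    have hCdet : ((A : Matrix (Fin n) (Fin n) ℝ) - μ • 1).det = 0 := by
      rw [hC, Matrix.det_mul, Matrix.det_mul, Matrix.det_diagonal]
      rw [Finset.prod_eq_zero (Finset.mem_univ i₀) (sub_self μ)]
      ring
    set B : SymMat n := t • (A - μ • e1) with hB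
    have hBcoe : (B : Matrix (Fin n) (Fin n) ℝ)
        = t • ((A : Matrix (Fin n) (Fin n) ℝ) - μ • 1) := by
      simp [hB, he1]
    have hres := h2 B ⟨by rw [hBcoe]; exact mySmulPSD ht.le hCpsd,
      by rw [hBcoe, Matrix.det_smul, hCdet, mul_zero]⟩
    have hTBcoe : (T B : Matrix (Fin n) (Fin n) ℝ)
        = t • ((T A : Matrix (Fin n) (Fin n) ℝ) + (-μ) • (T e1 : Matrix (Fin n) (Fin n) ℝ)) := by
      rw [hB, _root_.map_smul, map_sub, _root_.map_smul]
      simp only [SetLike.val_smul, AddSubgroupClass.coe_sub]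
      rw [sub_eq_add_neg, ← neg_smul]
    have hTBpd : (T B : Matrix (Fin n) (Fin n) ℝ).PosDef := by
      rw [hTBcoe]
      exact mySmulPD ht (hTA.add_posSemidef (mySmulPSD (neg_nonneg.mpr hμ) hTe1.posSemidef))
    exact absurd hres.2 (ne_of_gt hTBpd.det_pos)
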